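/- Let G be a group of exponent dividing 4, metabelian, and nilpotent of class at most 4. Then for all a, b, c ∈ G: (ab, c)² = (a,c)²(b,c)² and (a, bc)² = (a,c)²(a,b)². -/

import Mathlib

/-- The commutator `(a,b) = a⁻¹ * b⁻¹ * a * b` used in the paper. -/
def paperComm {G : Type*} [Group G] (a b : G) : G := a⁻¹ * b⁻¹ * a * b

open scoped commutatorElement

section Aux

variable {G : Type*} [Group G]

lemma paperComm_eq_commElt (a b : G) : paperComm a b = ⁅a⁻¹, b⁻¹⁆ := by
  simp [paperComm, commutatorElement_def]

lemma paperComm_mem_succ (n : ℕ) (a b : G) (ha : a ∈ (⊤ : Subgroup G).lowerCentralSeries n) :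
    paperComm a b ∈ (⊤ : Subgroup G).lowerCentralSeries (n + 1) := by
  rw [paperComm_eq_commElt, Subgroup.lowerCentralSeries_succ]
  exact Subgroup.commutator_mem_commutator (Subgroup.inv_mem _ ha) (Subgroup.mem_top _)

lemma paperComm_mem_one (a b : G) : paperComm a b ∈ (⊤ : Subgroup G).lowerCentralSeries 1 :=
  paperComm_mem_succ 0 a b (by rw [Subgroup.lowerCentralSeries_zero]; exact Subgroup.mem_top a)

/-- Elements of `γ₄` (index 3) are central when `γ₅ = ⊥`. -/
lemma central_of_mem_three (hnil : (⊤ : Subgroup G).lowerCentralSeries 4 = ⊥)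
    (x : G) (hx : x ∈ (⊤ : Subgroup G).lowerCentralSeries 3) (g : G) : x * g = g * x := by
  have h : ⁅x, g⁆ ∈ (⊤ : Subgroup G).lowerCentralSeries 4 := by
    rw [Subgroup.lowerCentralSeries_succ]
    exact Subgroup.commutator_mem_commutator hx (Subgroup.mem_top g)
  rw [hnil, Subgroup.mem_bot] at h
  have := (commutatorElement_eq_one_iff_mul_comm).mp h
  exact this

/-- Key lemma: in a metabelian group of exponent dividing 4 and class ≤ 4,
the commutator of a derived-subgroup element with anything has order dividing 2. -/
lemma key_sq (hexp : ∀ x : G, x ^ 4 = 1)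
    (hmet : ∀ a ∈ (⊤ : Subgroup G).lowerCentralSeries 1, ∀ b ∈ (⊤ : Subgroup G).lowerCentralSeries 1, a * b = b * a)
    (hnil : (⊤ : Subgroup G).lowerCentralSeries 4 = ⊥)
    (β s : G) (hβ : β ∈ (⊤ : Subgroup G).lowerCentralSeries 1) :
    (paperComm β s) ^ 2 = 1 := by
  set d1 := paperComm β s with hd1def
  set d2 := paperComm d1 s with hd2def
  have hβ2 : d1 ∈ (⊤ : Subgroup G).lowerCentralSeries 2 := paperComm_mem_succ 1 β s hβ
  have hd2_3 : d2 ∈ (⊤ : Subgroup G).lowerCentralSeries 3 := paperComm_mem_succ 2 d1 s hβ2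
  have hd1K : d1 ∈ (⊤ : Subgroup G).lowerCentralSeries 1 := paperComm_mem_one β s
  have hd2K : d2 ∈ (⊤ : Subgroup G).lowerCentralSeries 1 := paperComm_mem_one d1 s
  have h12 : Commute β d1 := hmet β hβ d1 hd1K
  have h23 : Commute d1 d2 := hmet d1 hd1K d2 hd2K
  -- conjugation formulas
  have e1 : s⁻¹ * β * s = β * d1 := by rw [hd1def]; unfold paperComm; group
  have e2 : s⁻¹ * d1 * s = d1 * d2 := by rw [hd2def]; unfold paperComm; group
  have e3 : s⁻¹ * d2 * s = d2 := by
    have h := central_of_mem_three hnil d2 hd2_3 s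
    rw [mul_assoc, h, ← mul_assoc, inv_mul_cancel, one_mul]
  -- square of s*β
  have hA : (s * β) ^ 2 = s ^ 2 * ((β * d1) * β) := by
    have : (s * β) ^ 2 = s ^ 2 * ((s⁻¹ * β * s) * β) := by
      simp only [pow_succ, pow_zero, one_mul]; group
    rw [this, e1]
  have hA' : (β * d1) * β = β ^ 2 * d1 := by
    rw [mul_assoc, h12.symm.eq, ← mul_assoc, ← sq]
  -- conjugate of β² d1
  have hC : s⁻¹ * (β ^ 2 * d1) * s = β ^ 2 * (d1 ^ 3 * d2) := by
    have h1 : s⁻¹ * (β ^ 2 * d1) * s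
        = ((s⁻¹ * β * s) * (s⁻¹ * β * s)) * (s⁻¹ * d1 * s) := by
      simp only [pow_succ, pow_zero, one_mul]; group
    rw [h1, e1, e2]
    have h2 : (β * d1) * (β * d1) = (β * d1) ^ 2 := (sq _).symm
    rw [h2, h12.mul_pow]
    rw [mul_assoc]
    congr 1
    rw [← mul_assoc, ← pow_succ]
  -- conjugate of β² (d1³ d2)
  have hD : s⁻¹ * (β ^ 2 * (d1 ^ 3 * d2)) * s = β ^ 2 * (d1 ^ 5 * d2 ^ 4) := by
    have h1 : s⁻¹ * (β ^ 2 * (d1 ^ 3 * d2)) * s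
        = ((s⁻¹ * β * s) * (s⁻¹ * β * s))
          * ((((s⁻¹ * d1 * s) * (s⁻¹ * d1 * s)) * (s⁻¹ * d1 * s)) * (s⁻¹ * d2 * s)) := by
      simp only [pow_succ, pow_zero, one_mul]; group
    rw [h1, e1, e2, e3]
    have h2 : (β * d1) * (β * d1) = β ^ 2 * d1 ^ 2 := by rw [← sq, h12.mul_pow]
    have h3 : ((d1 * d2) * (d1 * d2)) * (d1 * d2) = d1 ^ 3 * d2 ^ 3 := by
      rw [← sq, ← pow_succ, h23.mul_pow]
    rw [h2, h3, mul_assoc]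
    congr 1
    -- d1 ^ 2 * (d1 ^ 3 * d2 ^ 3 * d2) = d1 ^ 5 * d2 ^ 4
    rw [mul_assoc (d1 ^ 3), ← pow_succ, ← mul_assoc, ← pow_add]
  -- assemble (s β)^4
  have conj_sq : ∀ t γ : G, (t * γ) ^ 2 = t ^ 2 * ((t⁻¹ * γ * t) * γ) := by
    intro t γ
    simp only [pow_succ, pow_zero, one_mul]; group
  have hconj2 : (s ^ 2)⁻¹ * (β ^ 2 * d1) * s ^ 2 = β ^ 2 * (d1 ^ 5 * d2 ^ 4) := by
    have h1 : (s ^ 2)⁻¹ * (β ^ 2 * d1) * s ^ 2 = s⁻¹ * (s⁻¹ * (β ^ 2 * d1) * s) * s := by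
      simp only [pow_succ, pow_zero, one_mul]; group
    rw [h1, hC, hD]
  have hfin : (β ^ 2 * (d1 ^ 5 * d2 ^ 4)) * (β ^ 2 * d1) = 1 := by
    have h := hexp (s * β)
    have h0 : (s * β) ^ 4 = ((s * β) ^ 2) ^ 2 := by
      rw [← pow_mul]
    rw [h0, hA, hA', conj_sq (s ^ 2) (β ^ 2 * d1), hconj2] at h
    have h4 : (s ^ 2) ^ 2 = s ^ 4 := by rw [← pow_mul]
    rw [h4, hexp s, one_mul] at h
    exact h
  -- collect: β⁴ d1⁶ d2⁴ = 1
  have hcol : (β ^ 2 * (d1 ^ 5 * d2 ^ 4)) * (β ^ 2 * d1) = β ^ 4 * (d1 ^ 6 * d2 ^ 4) := by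
    have hbd2 : Commute β d2 := hmet β hβ d2 hd2K
    have hb2 : Commute (β ^ 2) (d1 ^ 5 * d2 ^ 4) :=
      ((h12.pow_pow 2 5).mul_right (hbd2.pow_pow 2 4))
    have hd2d1 : Commute (d2 ^ 4) d1 := (h23.symm.pow_left 4)
    calc (β ^ 2 * (d1 ^ 5 * d2 ^ 4)) * (β ^ 2 * d1)
        = β ^ 2 * ((d1 ^ 5 * d2 ^ 4) * β ^ 2) * d1 := by
          simp only [pow_succ, pow_zero, one_mul]; group
      _ = β ^ 2 * (β ^ 2 * (d1 ^ 5 * d2 ^ 4)) * d1 := by rw [hb2.symm.eq]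
      _ = (β ^ 2 * β ^ 2) * ((d1 ^ 5 * (d2 ^ 4 * d1))) := by
          simp only [pow_succ, pow_zero, one_mul]; group
      _ = (β ^ 2 * β ^ 2) * ((d1 ^ 5 * (d1 * d2 ^ 4))) := by rw [hd2d1.eq]
      _ = β ^ 4 * (d1 ^ 6 * d2 ^ 4) := by
          simp only [pow_succ, pow_zero, one_mul]; group
  rw [hcol] at hfin
  rw [hexp β, one_mul] at hfin
  -- d1^6 * d2^4 = 1
  rw [hexp d2, mul_one] at hfin
  -- d1^6 = 1, d1^4 = 1 ⇒ d1^2 = 1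
  have h6 : d1 ^ 2 * d1 ^ 4 = 1 := by rw [← pow_add]; exact hfin
  rw [hexp d1, mul_one] at h6
  exact h6

end Aux

theorem comm_sq_distrib {G : Type*} [Group G]
    (hexp : ∀ x : G, x ^ 4 = 1)
    (hmet : ∀ a ∈ (⊤ : Subgroup G).lowerCentralSeries 1, ∀ b ∈ (⊤ : Subgroup G).lowerCentralSeries 1, a * b = b * a)
    (hnil : (⊤ : Subgroup G).lowerCentralSeries 4 = ⊥) (a b c : G) :
    (paperComm (a * b) c) ^ 2 = (paperComm a c) ^ 2 * (paperComm b c) ^ 2 ∧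
    (paperComm a (b * c)) ^ 2 = (paperComm a c) ^ 2 * (paperComm a b) ^ 2 := by
  constructor
  · -- (ab,c) = (a,c) * (((a,c),b) * (b,c))
    have hexp1 : paperComm (a * b) c
        = paperComm a c * (paperComm (paperComm a c) b * paperComm b c) := by
      unfold paperComm; group
    set u := paperComm a c
    set v := paperComm (paperComm a c) b
    set w := paperComm b c
    have hu : u ∈ (⊤ : Subgroup G).lowerCentralSeries 1 := paperComm_mem_one a c
    have hv : v ∈ (⊤ : Subgroup G).lowerCentralSeries 1 := paperComm_mem_one _ b
    have hw : w ∈ (⊤ : Subgroup G).lowerCentralSeries 1 := paperComm_mem_one b c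
    have hvw : Commute v w := hmet v hv w hw
    have huv : Commute u v := hmet u hu v hv
    have huw : Commute u w := hmet u hu w hw
    have huvw : Commute u (v * w) := huv.mul_right huw
    have hv2 : v ^ 2 = 1 := key_sq hexp hmet hnil (paperComm a c) b hu
    rw [hexp1, huvw.mul_pow, hvw.mul_pow, hv2, one_mul]
  · -- (a,bc) = (a,c) * ((a,b) * ((a,b),c))
    have hexp2 : paperComm a (b * c)
        = paperComm a c * (paperComm a b * paperComm (paperComm a b) c) := by
      unfold paperComm; group
    set u := paperComm a c
    set v := paperComm a b
    set w := paperComm (paperComm a b) c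
    have hu : u ∈ (⊤ : Subgroup G).lowerCentralSeries 1 := paperComm_mem_one a c
    have hv : v ∈ (⊤ : Subgroup G).lowerCentralSeries 1 := paperComm_mem_one a b
    have hw : w ∈ (⊤ : Subgroup G).lowerCentralSeries 1 := paperComm_mem_one _ c
    have hvw : Commute v w := hmet v hv w hw
    have huv : Commute u v := hmet u hu v hv
    have huw : Commute u w := hmet u hu w hw
    have huvw : Commute u (v * w) := huv.mul_right huw
    have hw2 : w ^ 2 = 1 := key_sq hexp hmet hnil (paperComm a b) c hv
    rw [hexp2, huvw.mul_pow, hvw.mul_pow, hw2, mul_one]
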